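/- arXiv:2501.10633 — 2 statements merged into one kernel-verified Lean document; each statement's English description precedes it below -/
import Mathlib

section
/- Let G be a graph on n vertices such that for every pair of non-adjacent vertices u, v the sum deg(u) + deg(v) is at least n, and suppose n ≥ 3. Then G is Hamiltonian (Ore's theorem). -/
open SimpleGraph Finset List

namespace OreAux

variable {V : Type*} [Fintype V] [DecidableEq V]

lemma hamCycle_iff {G : SimpleGraph V} {a : V} {c : G.Walk a a} :
    c.IsHamiltonianCycle ↔ c.IsCycle ∧ ∀ x, c.support.tail.count x = 1 :=
  SimpleGraph.Walk.isHamiltonianCycle_iff_isCycle_and_support_count_tail_eq_one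

lemma hamCycle_rotate {G : SimpleGraph V} {a u : V} {c : G.Walk a a}
    (hc : c.IsHamiltonianCycle) (h : u ∈ c.support) :
    (c.rotate _ h).IsHamiltonianCycle := by
  rw [hamCycle_iff] at hc ⊢
  refine ⟨hc.1.rotate h, fun x => ?_⟩
  rw [(SimpleGraph.Walk.support_rotate c _ h).perm.count_eq]
  exact hc.2 x

/-- From a hamiltonian cycle and a dart of it, extract a hamiltonian path between
the dart's endpoints avoiding that edge. -/
lemma path_of_cycle_dart {G : SimpleGraph V} {a : V} {c : G.Walk a a}
    (hc : c.IsHamiltonianCycle) {d : G.Dart} (hd : d ∈ c.darts) :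
    ∃ q : G.Walk d.snd d.fst, q.IsHamiltonian ∧ s(d.fst, d.snd) ∉ q.edges := by
  have hfst : d.fst ∈ c.support := SimpleGraph.Walk.dart_fst_mem_support_of_mem_darts _ hd
  have hrot : (c.rotate _ hfst).IsHamiltonianCycle := hamCycle_rotate hc hfst
  have hd' : d ∈ (c.rotate _ hfst).darts := (SimpleGraph.Walk.rotate_darts c _ hfst).mem_iff.2 hd
  obtain ⟨w, hadj, q, hq⟩ := SimpleGraph.Walk.not_nil_iff.1 hrot.isCycle.not_nil
  rw [hq] at hrot hd'
  have hcount : ∀ x, q.support.count x = 1 := by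
    intro x
    have := (hamCycle_iff.1 hrot).2 x
    rwa [SimpleGraph.Walk.support_cons, List.tail_cons] at this
  have hqnodup : q.support.Nodup :=
    List.nodup_iff_count_le_one.2 fun x => le_of_eq (hcount x)
  rw [SimpleGraph.Walk.darts_cons] at hd'
  rcases List.mem_cons.1 hd' with heq | hmem
  · have hw : d.snd = w := by rw [heq]
    subst hw
    refine ⟨q, fun x => hcount x, ?_⟩
    have htrail : (SimpleGraph.Walk.cons hadj q).edges.Nodup :=
      hrot.isCycle.isTrail.edges_nodup
    rw [SimpleGraph.Walk.edges_cons, List.nodup_cons] at htrail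
    exact htrail.1
  · exfalso
    have h1 : d.fst ∈ q.darts.map (·.fst) := List.mem_map_of_mem hmem
    have h2 : q.darts.map (·.fst) ++ [d.fst] = q.support :=
      SimpleGraph.Walk.map_fst_darts_append q
    rw [← h2, List.nodup_append] at hqnodup
    exact hqnodup.2.2 _ h1 _ (List.mem_singleton_self _) rfl

/-- The counting (pigeonhole) step of Ore's argument. -/
lemma exists_dart {G : SimpleGraph V} [DecidableRel G.Adj] {u v : V} {p : G.Walk u v}
    (hp : p.IsHamiltonian)
    (hdeg : Fintype.card V ≤ G.degree u + G.degree v) :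
    ∃ d ∈ p.darts, G.Adj u d.snd ∧ G.Adj d.fst v := by
  classical
  have hsupnd : p.support.Nodup := hp.isPath.support_nodup
  have hdartsnd : p.darts.Nodup :=
    List.Nodup.of_map SimpleGraph.Dart.edge hp.isPath.isTrail.edges_nodup
  have hsndnd : (p.darts.map (·.snd)).Nodup := by
    rw [SimpleGraph.Walk.map_snd_darts]
    exact hsupnd.tail
  have hfstnd : (p.darts.map (·.fst)).Nodup := by
    rw [SimpleGraph.Walk.map_fst_darts]
    exact (List.dropLast_sublist _).nodup hsupnd
  set S : Finset G.Dart := p.darts.toFinset with hS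
  set A : Finset G.Dart := S.filter (fun d => G.Adj u d.snd) with hA
  set B : Finset G.Dart := S.filter (fun d => G.Adj d.fst v) with hB
  have hAcard : A.card = G.degree u := by
    show A.card = (G.neighborFinset u).card
    apply Finset.card_bij (fun d _ => d.snd)
    · intro d hd
      rw [SimpleGraph.mem_neighborFinset]
      exact (Finset.mem_filter.1 hd).2
    · intro d1 h1 d2 h2 hsnd
      exact List.inj_on_of_nodup_map hsndnd
        (List.mem_toFinset.1 (Finset.mem_filter.1 h1).1)
        (List.mem_toFinset.1 (Finset.mem_filter.1 h2).1) hsnd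
    · intro w hw
      rw [SimpleGraph.mem_neighborFinset] at hw
      have hwsup : w ∈ p.support := hp.mem_support w
      have hwne : w ≠ u := fun h => G.irrefl (h ▸ hw)
      have : w ∈ p.support.tail := by
        rw [SimpleGraph.Walk.support_eq_cons] at hwsup
        rcases List.mem_cons.1 hwsup with h | h
        · exact absurd h hwne
        · exact h
      rw [← SimpleGraph.Walk.map_snd_darts] at this
      obtain ⟨d, hd, hds⟩ := List.mem_map.1 this
      exact ⟨d, Finset.mem_filter.2 ⟨List.mem_toFinset.2 hd, hds ▸ hw⟩, hds⟩
  have hBcard : B.card = G.degree v := by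
    show B.card = (G.neighborFinset v).card
    apply Finset.card_bij (fun d _ => d.fst)
    · intro d hd
      rw [SimpleGraph.mem_neighborFinset]
      exact (Finset.mem_filter.1 hd).2.symm
    · intro d1 h1 d2 h2 hfst
      exact List.inj_on_of_nodup_map hfstnd
        (List.mem_toFinset.1 (Finset.mem_filter.1 h1).1)
        (List.mem_toFinset.1 (Finset.mem_filter.1 h2).1) hfst
    · intro w hw
      rw [SimpleGraph.mem_neighborFinset] at hw
      have hwsup : w ∈ p.support := hp.mem_support w
      have hwne : w ≠ v := fun h => G.irrefl (h ▸ hw)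
      have : w ∈ p.darts.map (·.fst) := by
        rw [← SimpleGraph.Walk.map_fst_darts_append] at hwsup
        rcases List.mem_append.1 hwsup with h | h
        · exact h
        · exact absurd (List.mem_singleton.1 h) hwne
      obtain ⟨d, hd, hds⟩ := List.mem_map.1 this
      exact ⟨d, Finset.mem_filter.2 ⟨List.mem_toFinset.2 hd, hds ▸ hw.symm⟩, hds⟩
  have hScard : S.card = Fintype.card V - 1 := by
    rw [hS, List.toFinset_card_of_nodup hdartsnd, SimpleGraph.Walk.length_darts,
      hp.length_eq]
  have hUnion : (A ∪ B).card ≤ Fintype.card V - 1 := by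
    rw [← hScard]
    exact Finset.card_le_card (Finset.union_subset (Finset.filter_subset _ _)
      (Finset.filter_subset _ _))
  have hkey := Finset.card_inter_add_card_union A B
  have hVpos : 1 ≤ Fintype.card V := Fintype.card_pos_iff.2 ⟨u⟩
  have hABpos : 0 < (A ∩ B).card := by omega
  obtain ⟨d, hd⟩ := Finset.card_pos.1 hABpos
  rw [Finset.mem_inter] at hd
  exact ⟨d, List.mem_toFinset.1 (Finset.mem_filter.1 hd.1).1,
    (Finset.mem_filter.1 hd.1).2, (Finset.mem_filter.1 hd.2).2⟩

/-- The rotation step: a hamiltonian path between nonadjacent vertices with large degree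
sum yields a hamiltonian cycle. -/
lemma cycle_of_path {G : SimpleGraph V} [DecidableRel G.Adj] {u v : V} (p : G.Walk u v)
    (hp : p.IsHamiltonian) (huv : u ≠ v) (hnadj : ¬ G.Adj u v)
    (hdeg : Fintype.card V ≤ G.degree u + G.degree v) :
    ∃ (z : V) (c : G.Walk z z), c.IsHamiltonianCycle := by
  obtain ⟨d, hd, husnd, hfstv⟩ := exists_dart hp hdeg
  have hx : d.fst ∈ p.support := SimpleGraph.Walk.dart_fst_mem_support_of_mem_darts _ hd
  have hspec := p.take_spec hx
  have hxv : d.fst ≠ v := fun h => G.irrefl (h ▸ hfstv)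
  obtain ⟨w, hadj, p3, hq⟩ :=
    SimpleGraph.Walk.not_nil_iff.1
      (SimpleGraph.Walk.not_nil_of_ne (p := p.dropUntil d.fst hx) hxv)
  have hfstnd : (p.darts.map (·.fst)).Nodup := by
    rw [SimpleGraph.Walk.map_fst_darts]
    exact (List.dropLast_sublist _).nodup hp.isPath.support_nodup
  have hd' : (⟨(d.fst, w), hadj⟩ : G.Dart) ∈ p.darts := by
    rw [← hspec, SimpleGraph.Walk.darts_append]
    refine List.mem_append.2 (Or.inr ?_)
    rw [hq, SimpleGraph.Walk.darts_cons]
    exact List.mem_cons_self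
  have hdw : d = (⟨(d.fst, w), hadj⟩ : G.Dart) :=
    List.inj_on_of_nodup_map hfstnd hd hd' rfl
  have hw : d.snd = w := by rw [hdw]
  subst hw
  -- p = p1 ++ (cons hadj p3), with  hadj : Adj d.fst d.snd,  p3 : Walk d.snd v
  set p1 := p.takeUntil d.fst hx with hp1
  have hsupp : p.support = p1.support ++ p3.support := by
    conv_lhs => rw [← hspec]
    rw [SimpleGraph.Walk.support_append, hq, SimpleGraph.Walk.support_cons, List.tail_cons]
  set r := p1.append (SimpleGraph.Walk.cons hfstv p3.reverse) with hr
  have hperm : r.support.Perm p.support := by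
    rw [hr, SimpleGraph.Walk.support_append, SimpleGraph.Walk.support_cons, List.tail_cons,
      SimpleGraph.Walk.support_reverse, hsupp]
    exact List.Perm.append_left _ (List.reverse_perm _)
  have hrnodup : r.support.Nodup := hperm.nodup_iff.2 hp.isPath.support_nodup
  have hdisj : p1.support.Disjoint p3.support := by
    have := hp.isPath.support_nodup
    rw [hsupp, List.nodup_append] at this
    exact fun a ha hb => this.2.2 a ha a hb rfl
  have hnotmem : s(d.snd, u) ∉ r.edges := by
    intro hmem
    rw [hr, SimpleGraph.Walk.edges_append, SimpleGraph.Walk.edges_cons] at hmem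
    rcases List.mem_append.1 hmem with h1 | h2
    · exact hdisj (SimpleGraph.Walk.fst_mem_support_of_mem_edges p1 h1)
        p3.start_mem_support
    · rcases List.mem_cons.1 h2 with h3 | h4
      · rcases Sym2.eq_iff.1 h3 with ⟨hh1, hh2⟩ | ⟨hh1, hh2⟩
        · exact huv hh2
        · exact hnadj (hh2 ▸ hfstv)
      · have : u ∈ p3.reverse.support :=
          SimpleGraph.Walk.snd_mem_support_of_mem_edges _ h4
        rw [SimpleGraph.Walk.support_reverse, List.mem_reverse] at this
        exact hdisj p1.start_mem_support this
  refine ⟨d.snd, SimpleGraph.Walk.cons husnd.symm r, ?_⟩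
  rw [hamCycle_iff]
  constructor
  · rw [SimpleGraph.Walk.cons_isCycle_iff]
    exact ⟨SimpleGraph.Walk.IsPath.mk' hrnodup, hnotmem⟩
  · intro x
    rw [SimpleGraph.Walk.support_cons, List.tail_cons, hperm.count_eq]
    exact hp x

lemma exists_path_support {G : SimpleGraph V} (hG : ∀ x y : V, x ≠ y → G.Adj x y) :
    ∀ (l : List V), l.Nodup → l ≠ [] → ∃ (a b : V) (p : G.Walk a b), p.support = l
  | [], _, h => absurd rfl h
  | [x], _, _ => ⟨x, x, SimpleGraph.Walk.nil, rfl⟩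
  | x :: y :: t, hnd, _ => by
    obtain ⟨a, b, p, hsup⟩ := exists_path_support hG (y :: t) hnd.of_cons (by simp)
    have ha : a = y := by
      have h := hsup
      rw [SimpleGraph.Walk.support_eq_cons] at h
      exact (List.cons.injEq _ _ _ _ ▸ h).1
    subst ha
    have hxy : x ≠ a := by
      intro h
      subst h
      exact (List.nodup_cons.1 hnd).1 List.mem_cons_self
    exact ⟨x, b, SimpleGraph.Walk.cons (hG x a hxy) p,
      by rw [SimpleGraph.Walk.support_cons, hsup]⟩

lemma complete_hamiltonian {G : SimpleGraph V} (h3 : 3 ≤ Fintype.card V)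
    (hG : ∀ x y : V, x ≠ y → G.Adj x y) : G.IsHamiltonian := by
  intro _
  have hlen : (Finset.univ : Finset V).toList.length = Fintype.card V :=
    Finset.length_toList _
  have hndl : (Finset.univ : Finset V).toList.Nodup := Finset.nodup_toList _
  obtain ⟨x, y, t, hl⟩ : ∃ x y t, (Finset.univ : Finset V).toList = x :: y :: t := by
    rcases hlist : (Finset.univ : Finset V).toList with _ | ⟨x, _ | ⟨y, t⟩⟩
    · rw [hlist] at hlen; simp at hlen; omega
    · rw [hlist] at hlen; simp at hlen; omega
    · exact ⟨x, y, t, rfl⟩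
  rw [hl] at hndl hlen
  have htne : t ≠ [] := by
    intro h; subst h; simp at hlen; omega
  obtain ⟨a, b, p', hsup'⟩ := exists_path_support hG (y :: t) hndl.of_cons (by simp)
  have ha : a = y := by
    have h := hsup'
    rw [SimpleGraph.Walk.support_eq_cons] at h
    exact (List.cons.injEq _ _ _ _ ▸ h).1
  subst ha
  obtain ⟨c, t', rfl⟩ := List.exists_cons_of_ne_nil htne
  have hbt : b ∈ c :: t' := by
    have h1 : p'.support.getLast? = some b := by
      rw [List.getLast?_eq_getLast_of_ne_nil (l := p'.support) (by simp)]
      exact congrArg some (SimpleGraph.Walk.getLast_support p')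
    rw [hsup', List.getLast?_cons_cons] at h1
    exact List.mem_of_mem_getLast? h1
  have hxnot : x ∉ a :: c :: t' := (List.nodup_cons.1 hndl).1
  have hbx : b ≠ x := fun h => hxnot (h ▸ List.mem_cons_of_mem _ hbt)
  have hxa : x ≠ a := fun h => hxnot (h ▸ List.mem_cons_self)
  have hba : b ≠ a := fun h => (List.nodup_cons.1 hndl.of_cons).1 (h ▸ hbt)
  set p : G.Walk x b := SimpleGraph.Walk.cons (hG x a hxa) p' with hp
  have hpsup : p.support = x :: a :: c :: t' := by
    rw [hp, SimpleGraph.Walk.support_cons, hsup']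
  refine ⟨b, SimpleGraph.Walk.cons (hG b x hbx) p, ?_⟩
  rw [hamCycle_iff]
  have hpnodup : p.support.Nodup := by rw [hpsup]; exact hndl
  constructor
  · rw [SimpleGraph.Walk.cons_isCycle_iff]
    refine ⟨SimpleGraph.Walk.IsPath.mk' hpnodup, ?_⟩
    intro hmem
    rw [hp, SimpleGraph.Walk.edges_cons] at hmem
    rcases List.mem_cons.1 hmem with h1 | h2
    · rcases Sym2.eq_iff.1 h1 with ⟨hh1, hh2⟩ | ⟨hh1, hh2⟩
      · exact hbx hh1
      · exact hba hh1
    · exact hxnot (hsup' ▸ SimpleGraph.Walk.snd_mem_support_of_mem_edges p' h2)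
  · intro z
    rw [SimpleGraph.Walk.support_cons, List.tail_cons, hpsup]
    have hz : z ∈ x :: a :: c :: t' := by rw [← hl]; simp [Finset.mem_toList]
    exact List.count_eq_one_of_mem hndl hz

lemma oreAux : ∀ (k : ℕ) (G : SimpleGraph V) [DecidableRel G.Adj],
    Gᶜ.edgeFinset.card = k → 3 ≤ Fintype.card V →
    (∀ u v : V, u ≠ v → ¬ G.Adj u v → Fintype.card V ≤ G.degree u + G.degree v) →
    G.IsHamiltonian := by
  intro k
  induction k using Nat.strong_induction_on with
  | _ k ih =>
    intro G hdec hcard h3 hOre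
    by_cases hcomp : ∀ x y : V, x ≠ y → G.Adj x y
    · exact complete_hamiltonian h3 hcomp
    · push_neg at hcomp
      obtain ⟨u, v, huv, hnadj⟩ := hcomp
      set G' := G ⊔ SimpleGraph.fromEdgeSet {s(u, v)} with hG'
      haveI hdec' : DecidableRel G'.Adj := fun a b =>
        decidable_of_iff (G.Adj a b ∨ (s(a, b) = s(u, v) ∧ a ≠ b)) (by
          rw [hG']
          simp [SimpleGraph.fromEdgeSet_adj])
      have hle : G ≤ G' := le_sup_left
      have hadj' : G'.Adj u v := by
        rw [hG']
        exact Or.inr (by simp [huv])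
      have hlt : G < G' := lt_of_le_of_ne hle (by
        intro h
        rw [← h] at hadj'
        exact hnadj hadj')
      have hmlt : G'ᶜ.edgeFinset.card < k := by
        rw [← hcard]
        exact Finset.card_lt_card
          (SimpleGraph.edgeFinset_ssubset_edgeFinset.2 (compl_lt_compl_iff_lt.2 hlt))
      have hdegmono : ∀ a : V, G.degree a ≤ G'.degree a := by
        intro a
        show (G.neighborFinset a).card ≤ (G'.neighborFinset a).card
        apply Finset.card_le_card
        intro w hw
        rw [SimpleGraph.mem_neighborFinset] at *
        exact hle hw
      have hOre' : ∀ a b : V, a ≠ b → ¬ G'.Adj a b →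
          Fintype.card V ≤ G'.degree a + G'.degree b := by
        intro a b hab hnadj'
        have hG : ¬ G.Adj a b := fun h => hnadj' (hle h)
        exact le_trans (hOre a b hab hG) (Nat.add_le_add (hdegmono a) (hdegmono b))
      obtain ⟨z, c, hc⟩ := ih _ hmlt G' rfl h3 hOre' (by omega)
      by_cases hmem : s(u, v) ∈ c.edges
      · -- cycle uses the new edge: extract a hamiltonian path and rotate
        have hmem' : s(u, v) ∈ c.darts.map SimpleGraph.Dart.edge := hmem
        obtain ⟨d, hd, hedge⟩ := List.mem_map.1 hmem'
        have hedge' : s(d.fst, d.snd) = s(u, v) := hedge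
        obtain ⟨q, hqham, hqnot⟩ := path_of_cycle_dart hc hd
        have hqsub : ∀ e ∈ q.edges, e ∈ G.edgeSet := by
          intro e he
          have h1 : e ∈ G'.edgeSet := q.edges_subset_edgeSet he
          rw [hG', SimpleGraph.edgeSet_sup] at h1
          rcases h1 with h1 | h1
          · exact h1
          · exfalso
            rw [SimpleGraph.edgeSet_fromEdgeSet] at h1
            have : e = s(u, v) := h1.1
            exact hqnot (by rwa [hedge', ← this])
        set qG := q.transfer G hqsub with hqG
        have hqGham : qG.IsHamiltonian := by
          intro x
          rw [hqG, SimpleGraph.Walk.support_transfer]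
          exact hqham x
        have hne : d.snd ≠ d.fst ∧ ¬ G.Adj d.snd d.fst := by
          rcases Sym2.eq_iff.1 hedge' with ⟨h1, h2⟩ | ⟨h1, h2⟩
          · rw [h1, h2]
            exact ⟨huv.symm, fun h => hnadj h.symm⟩
          · rw [h1, h2]
            exact ⟨huv, hnadj⟩
        exact fun _ =>
          cycle_of_path qG hqGham hne.1 hne.2 (hOre _ _ hne.1 hne.2)
      · -- cycle avoids the new edge: transfer it to G
        have hsub : ∀ e ∈ c.edges, e ∈ G.edgeSet := by
          intro e he
          have h1 : e ∈ G'.edgeSet := c.edges_subset_edgeSet he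
          rw [hG', SimpleGraph.edgeSet_sup] at h1
          rcases h1 with h1 | h1
          · exact h1
          · exfalso
            rw [SimpleGraph.edgeSet_fromEdgeSet] at h1
            exact hmem (h1.1 ▸ he)
        refine fun _ => ⟨z, c.transfer G hsub, ?_⟩
        rw [hamCycle_iff] at hc ⊢
        refine ⟨hc.1.transfer hsub, fun x => ?_⟩
        rw [SimpleGraph.Walk.support_transfer]
        exact hc.2 x

end OreAux

theorem stmt_5 {V : Type*} [Fintype V] [DecidableEq V]
    (G : SimpleGraph V) [DecidableRel G.Adj]
    (hn : 3 ≤ Fintype.card V)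
    (hOre : ∀ u v : V, u ≠ v → ¬ G.Adj u v →
      Fintype.card V ≤ G.degree u + G.degree v) :
    G.IsHamiltonian := by
  exact OreAux.oreAux (Gᶜ.edgeFinset.card) G rfl hn hOre
end

section
/- Let P = v₁v₂…v_h be a path in a graph G such that neither v₁ nor v_h has a neighbor outside V(P). If both v₁v_{i+1} and v_i v_h are edges of G for some i, and G is connected with h < |V(G)|, then G contains a path on h + 1 vertices. -/
private lemma chain'_rotate {α : Type*} {R : α → α → Prop} {c : List α}
    (hc : c.Chain' R)
    (hcyc : ∀ x ∈ c.getLast?, ∀ y ∈ c.head?, R x y) (j : ℕ) :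
    (c.drop j ++ c.take j).Chain' R := by
  rw [List.Chain', List.isChain_append]
  refine ⟨List.IsChain.drop hc j, List.IsChain.take hc j, ?_⟩
  intro x hx y hy
  apply hcyc
  · -- x ∈ (c.drop j).getLast? → x ∈ c.getLast?
    rw [Option.mem_def] at hx ⊢
    conv_lhs => rw [← List.take_append_drop j c]
    rw [List.getLast?_append, hx]
    rfl
  · -- y ∈ (c.take j).head? → y ∈ c.head?
    rw [Option.mem_def] at hy ⊢
    rcases j with _ | n
    · simp at hy
    · rcases c with _ | ⟨a, t⟩
      · simp at hy
      · simpa using hy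

private lemma cycle_extend {V : Type*} {G : SimpleGraph V} {c : List V}
    (hc : c.Chain' G.Adj)
    (hcyc : ∀ x ∈ c.getLast?, ∀ y ∈ c.head?, G.Adj x y)
    (hnd : c.Nodup) {x y : V} (hx : x ∈ c) (hy : y ∉ c) (hxy : G.Adj x y) :
    ∃ l' : List V, l'.Chain' G.Adj ∧ l'.Nodup ∧ l'.length = c.length + 1 := by
  obtain ⟨j, hj, rfl⟩ := List.mem_iff_getElem.mp hx
  have hp : (c.drop j ++ c.take j).Perm c :=
    (List.perm_append_comm).trans (by rw [List.take_append_drop])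
  refine ⟨y :: (c.drop j ++ c.take j), ?_, ?_, ?_⟩
  · rw [List.Chain', List.isChain_cons]
    refine ⟨?_, chain'_rotate hc hcyc j⟩
    intro z hz
    rw [Option.mem_def, List.head?_append_of_ne_nil] at hz
    · rw [List.head?_drop, List.getElem?_eq_getElem hj] at hz
      cases hz
      exact hxy.symm
    · intro hnil
      rw [List.drop_eq_nil_iff] at hnil
      omega
  · rw [List.nodup_cons]
    exact ⟨fun hmem => hy (hp.mem_iff.mp hmem), hp.nodup_iff.mpr hnd⟩
  · simp [hp.length_eq]

theorem stmt_7 {V : Type*} [Fintype V] [DecidableEq V]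
    (G : SimpleGraph V) (hconn : G.Connected)
    (l : List V) (hne : l ≠ []) (h : ℕ) (hlen : l.length = h)
    (hchain : l.Chain' G.Adj) (hnodup : l.Nodup)
    (hhead : ∀ w : V, G.Adj (l.head hne) w → w ∈ l)
    (hlast : ∀ w : V, G.Adj (l.getLast hne) w → w ∈ l)
    (i : ℕ) (hi1 : i + 1 < l.length) (hi0 : i < l.length)
    (hadj1 : G.Adj (l.head hne) (l[i+1]'hi1))
    (hadj2 : G.Adj (l[i]'hi0) (l.getLast hne))
    (hh : h < Fintype.card V) :
    ∃ l' : List V, l'.Chain' G.Adj ∧ l'.Nodup ∧ l'.length = h + 1 := by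
  classical
  -- the rotated cycle list
  set c : List V := l.take (i + 1) ++ (l.drop (i + 1)).reverse with hc_def
  have hdropne : l.drop (i + 1) ≠ [] := by
    apply List.ne_nil_of_length_pos
    rw [List.length_drop]
    omega
  have htakene : l.take (i + 1) ≠ [] := by
    apply List.ne_nil_of_length_pos
    rw [List.length_take]
    omega
  have hperm : c.Perm l := by
    have h1 : (l.take (i + 1) ++ (l.drop (i + 1)).reverse).Perm
        (l.take (i + 1) ++ l.drop (i + 1)) :=
      List.Perm.append_left _ (List.reverse_perm _)
    rw [List.take_append_drop] at h1
    exact h1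
  -- getLast? / head? computations
  have htake_last : (l.take (i + 1)).getLast? = some (l[i]'hi0) := by
    rw [← List.take_concat_get hi0, List.concat_eq_append,
      List.getLast?_append]
    rfl
  have hdrop_last : (l.drop (i + 1)).getLast? = some (l.getLast hne) := by
    have := List.take_append_drop (i + 1) l
    conv_rhs => rw [← List.getLast?_eq_getLast hne, ← this]
    rw [List.getLast?_append, List.getLast?_eq_getLast hdropne]
    rfl
  have hdrop_head : (l.drop (i + 1)).head? = some (l[i+1]'hi1) := by
    rw [List.head?_drop, List.getElem?_eq_getElem hi1]
  have hc_head : c.head? = some (l.head hne) := by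
    rw [hc_def, List.head?_append_of_ne_nil _ htakene]
    rcases l with _ | ⟨a, t⟩
    · exact absurd rfl hne
    · rfl
  have hc_last : c.getLast? = some (l[i+1]'hi1) := by
    rw [hc_def, List.getLast?_append, List.getLast?_reverse, hdrop_head]
    rfl
  -- c is a chain
  have hc_chain : c.Chain' G.Adj := by
    rw [hc_def, List.Chain', List.isChain_append]
    refine ⟨List.IsChain.take hchain _, ?_, ?_⟩
    · rw [List.isChain_reverse]
      exact (List.IsChain.drop hchain _).imp fun a b hab => hab.symm
    · intro x hx y hy
      rw [Option.mem_def, htake_last] at hx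
      rw [Option.mem_def, List.head?_reverse, hdrop_last] at hy
      cases hx; cases hy
      exact hadj2
  have hc_cyc : ∀ x ∈ c.getLast?, ∀ y ∈ c.head?, G.Adj x y := by
    intro x hx y hy
    rw [Option.mem_def, hc_last] at hx
    rw [Option.mem_def, hc_head] at hy
    cases hx; cases hy
    exact hadj1.symm
  have hc_nodup : c.Nodup := hperm.nodup_iff.mpr hnodup
  have hc_len : c.length = h := by rw [hperm.length_eq, hlen]
  -- find a vertex outside l
  have : ∃ y : V, y ∉ l := by
    by_contra hcon
    push_neg at hcon
    have : (Finset.univ : Finset V) ⊆ l.toFinset := fun v _ => by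
      simpa using hcon v
    have := Finset.card_le_card this
    rw [List.toFinset_card_of_nodup hnodup, hlen] at this
    simp only [Finset.card_univ] at this
    omega
  obtain ⟨y0, hy0⟩ := this
  -- boundary dart
  have hreach := hconn.preconnected (l.head hne) y0
  obtain ⟨w⟩ := hreach
  obtain ⟨d, _, hd1, hd2⟩ := w.exists_boundary_dart {v | v ∈ l}
    (List.head_mem hne) hy0
  have hxc : d.toProd.1 ∈ c := hperm.mem_iff.mpr hd1
  have hyc : d.toProd.2 ∉ c := fun hm => hd2 (hperm.mem_iff.mp hm)
  obtain ⟨l', h1, h2, h3⟩ := cycle_extend hc_chain hc_cyc hc_nodup hxc hyc d.adj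
  exact ⟨l', h1, h2, by rw [h3, hc_len]⟩
end
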